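/- arXiv:math/0410220 — 3 statements merged into one kernel-verified Lean document; each statement's English description precedes it below -/
import Mathlib

section
/- Let C be a commutative integral domain which is a subring of a field F, and let ≺ be a local monomial order on ℕ^n. Let f, g_1,…,g_r ∈ C[[x]] with each g_j nonzero, and let f = ∑_j q_j g_j + R be the division of f by g_1,…,g_r in F[[x]] with respect to ≺ (the unique tuple given by the division theorem). Then every coefficient of R and of each q_j has the form c / ∏_{j=1}^r lc(g_j)^{d_j} with c ∈ C and d_1,…,d_r ∈ ℕ; in other words, all these coefficients lie in the localization of C at the multiplicative submonoid generated by lc(g_1),…,lc(g_r) (viewed inside F). -/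
open MvPowerSeries

noncomputable section

/-- A monomial order: a linear (strict total) order on an additive monoid of exponents,
compatible with addition. -/
structure IsMonomialOrder {M : Type*} [AddCommMonoid M] (lt : M → M → Prop) : Prop where
  total : ∀ a b, lt a b ∨ a = b ∨ lt b a
  irrefl : ∀ a, ¬ lt a a
  trans : ∀ a b c, lt a b → lt b c → lt a c
  add_right : ∀ a b c, lt a b → lt (a + c) (b + c)

/-- A local monomial order: a monomial order for which `α ≼ 0` for every `α`. -/
structure IsLocalMonomialOrder {M : Type*} [AddCommMonoid M] (lt : M → M → Prop)
    extends IsMonomialOrder lt : Prop where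
  le_zero : ∀ a, a = 0 ∨ lt a 0

/-- A monomial well order: a monomial order for which `0` is the least element. -/
structure IsWellMonomialOrder {M : Type*} [AddCommMonoid M] (lt : M → M → Prop)
    extends IsMonomialOrder lt : Prop where
  zero_le : ∀ a, a = 0 ∨ lt 0 a

/-- The Newton diagram of a multivariate power series. -/
def ND {n : ℕ} {k : Type*} [Semiring k] (f : MvPowerSeries (Fin n) k) : Set (Fin n →₀ ℕ) :=
  {α | MvPowerSeries.coeff α f ≠ 0}

/-- `e` is the `lt`-greatest element of the Newton diagram of `f`, i.e. `e = exp(f)`. -/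
def IsExp {n : ℕ} {k : Type*} [Semiring k] (lt : (Fin n →₀ ℕ) → (Fin n →₀ ℕ) → Prop)
    (f : MvPowerSeries (Fin n) k) (e : Fin n →₀ ℕ) : Prop :=
  e ∈ ND f ∧ ∀ β ∈ ND f, β ≠ e → lt β e

/-- `e + ℕ^n`. -/
def upSet {n : ℕ} (e : Fin n →₀ ℕ) : Set (Fin n →₀ ℕ) := {α | ∃ γ, α = e + γ}

/-- The set of leading exponents of the nonzero elements of an ideal of power series. -/
def ExpSet {n : ℕ} {k : Type*} [Semiring k] (lt : (Fin n →₀ ℕ) → (Fin n →₀ ℕ) → Prop)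
    (J : Ideal (MvPowerSeries (Fin n) k)) : Set (Fin n →₀ ℕ) :=
  {e | ∃ f ∈ J, IsExp lt f e}

/-- The region `Δ_j` of the partition of `ℕ^n` associated with `e_1, …, e_r`. -/
def Delta {n r : ℕ} (e : Fin r → (Fin n →₀ ℕ)) (j : Fin r) : Set (Fin n →₀ ℕ) :=
  upSet (e j) \ ⋃ (i : Fin r) (_ : i < j), upSet (e i)

/-- The region `Δ̄` of the partition of `ℕ^n` associated with `e_1, …, e_r`. -/
def DeltaBar {n r : ℕ} (e : Fin r → (Fin n →₀ ℕ)) : Set (Fin n →₀ ℕ) :=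
  (⋃ (i : Fin r), upSet (e i))ᶜ

/-- Condition (ii) of the division theorem: each quotient `q_j` is `0` or satisfies
`ND(q_j) + e_j ⊆ Δ_j`. -/
def QuotCond {n r : ℕ} {k : Type*} [Semiring k] (e : Fin r → (Fin n →₀ ℕ))
    (q : Fin r → MvPowerSeries (Fin n) k) : Prop :=
  ∀ j, q j = 0 ∨ ∀ α ∈ ND (q j), α + e j ∈ Delta e j

/-- Condition (iii) of the division theorem: the remainder `R` is `0` or satisfies
`ND(R) ⊆ Δ̄`. -/
def RemCond {n r : ℕ} {k : Type*} [Semiring k] (e : Fin r → (Fin n →₀ ℕ))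
    (R : MvPowerSeries (Fin n) k) : Prop :=
  R = 0 ∨ ND R ⊆ DeltaBar e

section Aux

variable {F : Type} [Field F] {C : Subring F} {r : ℕ} {lc : Fin r → F}

/-- `x` is clearable: multiplying by a suitable product of powers of the `lc j` lands in `C`. -/
def Clr (C : Subring F) (lc : Fin r → F) (x : F) : Prop :=
  ∃ d : Fin r → ℕ, x * ∏ j, lc j ^ d j ∈ C

lemma clr_mono (hlc : ∀ j, lc j ∈ C) {x : F} {d d' : Fin r → ℕ} (hd : ∀ j, d j ≤ d' j)
    (h : x * ∏ j, lc j ^ d j ∈ C) : x * ∏ j, lc j ^ d' j ∈ C := by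
  have hp : (∏ j, lc j ^ d' j) = (∏ j, lc j ^ d j) * ∏ j, lc j ^ (d' j - d j) := by
    rw [← Finset.prod_mul_distrib]
    refine Finset.prod_congr rfl fun j _ => ?_
    rw [← pow_add]
    congr 1
    have := hd j; omega
  rw [hp, ← mul_assoc]
  exact C.mul_mem h (prod_mem fun j _ => C.pow_mem (hlc j) _)

lemma clr_zero : Clr C lc 0 := ⟨0, by simpa using C.zero_mem⟩

lemma clr_of_mem {x : F} (h : x ∈ C) : Clr C lc x := ⟨0, by simpa using h⟩

lemma clr_add (hlc : ∀ j, lc j ∈ C) {x y : F} (hx : Clr C lc x) (hy : Clr C lc y) :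
    Clr C lc (x + y) := by
  obtain ⟨d, hd⟩ := hx
  obtain ⟨d', hd'⟩ := hy
  refine ⟨fun j => max (d j) (d' j), ?_⟩
  rw [add_mul]
  exact C.add_mem (clr_mono hlc (fun j => le_max_left _ _) hd)
    (clr_mono hlc (fun j => le_max_right _ _) hd')

lemma clr_neg {x : F} (hx : Clr C lc x) : Clr C lc (-x) := by
  obtain ⟨d, hd⟩ := hx
  exact ⟨d, by rw [neg_mul]; exact C.neg_mem hd⟩

lemma clr_sub (hlc : ∀ j, lc j ∈ C) {x y : F} (hx : Clr C lc x) (hy : Clr C lc y) :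
    Clr C lc (x - y) := by
  rw [sub_eq_add_neg]; exact clr_add hlc hx (clr_neg hy)

lemma clr_mul_mem {x y : F} (hx : Clr C lc x) (hy : y ∈ C) : Clr C lc (x * y) := by
  obtain ⟨d, hd⟩ := hx
  exact ⟨d, by rw [mul_right_comm]; exact C.mul_mem hd hy⟩

lemma clr_sum (hlc : ∀ j, lc j ∈ C) {ι : Type*} (s : Finset ι) (v : ι → F)
    (h : ∀ i ∈ s, Clr C lc (v i)) : Clr C lc (∑ i ∈ s, v i) := by
  classical
  induction s using Finset.induction_on with
  | empty => simpa using clr_zero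
  | insert _ _ hns ih =>
    rw [Finset.sum_insert hns]
    exact clr_add hlc (h _ (Finset.mem_insert_self _ _))
      (ih fun i hi => h i (Finset.mem_insert_of_mem hi))

lemma clr_of_mul_lc (hlc : ∀ j, lc j ∈ C) {x : F} (i : Fin r) (h : Clr C lc (x * lc i)) :
    Clr C lc x := by
  classical
  obtain ⟨d, hd⟩ := h
  refine ⟨fun j => d j + (if j = i then 1 else 0), ?_⟩
  have hp : (∏ j, lc j ^ (d j + if j = i then 1 else 0))
      = (∏ j, lc j ^ d j) * ∏ j, (if j = i then lc j else 1) := by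
    rw [← Finset.prod_mul_distrib]
    refine Finset.prod_congr rfl fun j _ => ?_
    rw [pow_add]
    congr 1
    by_cases hj : j = i <;> simp [hj]
  have hone : (∏ j, (if j = i then lc j else 1)) = lc i := by
    rw [Finset.prod_ite_eq' Finset.univ i lc]
    simp
  rw [hp, hone, ← mul_assoc]
  rw [mul_right_comm x (lc i)] at hd
  exact hd

/-- For a local monomial order, the reversed relation is well-founded. -/
lemma wf_rev_of_local {n : ℕ} {lt : (Fin n →₀ ℕ) → (Fin n →₀ ℕ) → Prop}
    (hlt : IsLocalMonomialOrder lt) : WellFounded (fun a b => lt b a) := by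
  haveI : IsStrictOrder (Fin n →₀ ℕ) (fun a b => lt b a) :=
    { irrefl := fun a h => hlt.irrefl a h
      trans := fun a b c hab hbc => hlt.trans _ _ _ hbc hab }
  rw [RelEmbedding.wellFounded_iff_isEmpty]
  constructor
  intro emb
  have hstep : ∀ m : ℕ, lt (emb m) (emb (m + 1)) := by
    intro m
    exact emb.map_rel_iff.mpr (Nat.lt_succ_self m)
  have hmono : ∀ m k : ℕ, lt (emb m) (emb (m + k + 1)) := by
    intro m k
    induction k with
    | zero => exact hstep m
    | succ k ih => exact hlt.trans _ _ _ ih (hstep (m + k + 1))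
  have hlt_of_lt : ∀ m k : ℕ, m < k → lt (emb m) (emb k) := by
    intro m k hmk
    obtain ⟨j, rfl⟩ := Nat.exists_eq_add_of_lt hmk
    exact hmono m j
  obtain ⟨m, k, hmk, hle⟩ : ∃ m k, m < k ∧ emb m ≤ emb k :=
    Set.isPWO_of_wellQuasiOrderedLE (Set.univ : Set (Fin n →₀ ℕ)) (fun m => ⟨emb m, trivial⟩)
  obtain ⟨γ, hγ⟩ := exists_add_of_le hle
  have h1 : lt (emb m) (emb k) := hlt_of_lt m k hmk
  rcases hlt.le_zero γ with h0 | h0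
  · rw [h0, add_zero] at hγ
    rw [hγ] at h1
    exact hlt.irrefl _ h1
  · have h2 := hlt.add_right _ _ (emb m) h0
    rw [zero_add, add_comm γ (emb m), ← hγ] at h2
    exact hlt.irrefl _ (hlt.trans _ _ _ h1 h2)

end Aux

set_option maxHeartbeats 2000000 in
/-- if `f, g_1, …, g_r` have all their coefficients in a subring `C` of the
field `F`, then every coefficient of the remainder and of the quotients of the division of
`f` by the `g_j` in `F[[x]]` has the form `c / ∏_j lc(g_j)^{d_j}` with `c ∈ C`,
`d_j ∈ ℕ`. -/
theorem coeff_denominators_of_division {n : ℕ} (hn : 1 ≤ n) (F : Type) [Field F]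
    (C : Subring F)
    (lt : (Fin n →₀ ℕ) → (Fin n →₀ ℕ) → Prop) (hlt : IsLocalMonomialOrder lt)
    {r : ℕ} (g : Fin r → MvPowerSeries (Fin n) F) (hg : ∀ j, g j ≠ 0)
    (hgC : ∀ j α, MvPowerSeries.coeff α (g j) ∈ C)
    (f : MvPowerSeries (Fin n) F) (hfC : ∀ α, MvPowerSeries.coeff α f ∈ C)
    (e : Fin r → (Fin n →₀ ℕ)) (he : ∀ j, IsExp lt (g j) (e j))
    (q : Fin r → MvPowerSeries (Fin n) F) (R : MvPowerSeries (Fin n) F)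
    (hdiv : f = (∑ j, q j * g j) + R) (hq : QuotCond e q) (hR : RemCond e R) :
    ∀ α : Fin n →₀ ℕ,
      (∃ d : Fin r → ℕ,
        MvPowerSeries.coeff α R * ∏ j, (MvPowerSeries.coeff (e j) (g j)) ^ (d j) ∈ C) ∧
      (∀ i, ∃ d : Fin r → ℕ,
        MvPowerSeries.coeff α (q i) * ∏ j, (MvPowerSeries.coeff (e j) (g j)) ^ (d j) ∈ C) := by
  classical
  set lc : Fin r → F := fun j => MvPowerSeries.coeff (e j) (g j) with hlc_def
  have hlcC : ∀ j, lc j ∈ C := fun j => hgC j (e j)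
  -- the basic coefficient equation
  have eqn : ∀ α : Fin n →₀ ℕ, MvPowerSeries.coeff α f =
      (∑ j, ∑ p ∈ Finset.HasAntidiagonal.antidiagonal α,
        MvPowerSeries.coeff p.1 (q j) * MvPowerSeries.coeff p.2 (g j))
      + MvPowerSeries.coeff α R := by
    intro α
    rw [hdiv, map_add, map_sum]
    congr 1
    exact Finset.sum_congr rfl fun j _ => MvPowerSeries.coeff_mul α (q j) (g j)
  -- disjointness of the Delta regions
  have hDelta_disj : ∀ i j : Fin r, i ≠ j → ∀ α, α ∈ Delta e i → α ∉ Delta e j := by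
    intro i j hij α hi hj
    rcases lt_or_gt_of_ne hij with h | h
    · exact hj.2 (Set.mem_iUnion.mpr ⟨i, Set.mem_iUnion.mpr ⟨h, hi.1⟩⟩)
    · exact hi.2 (Set.mem_iUnion.mpr ⟨j, Set.mem_iUnion.mpr ⟨h, hj.1⟩⟩)
  -- main claim, by well-founded induction along the reversed order
  have key : ∀ α : Fin n →₀ ℕ,
      Clr C lc (MvPowerSeries.coeff α R) ∧
      ∀ i β, β + e i = α → Clr C lc (MvPowerSeries.coeff β (q i)) := by
    intro α
    induction α using (wf_rev_of_local hlt).induction with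
    | _ α IH =>
    -- IH : ∀ y, lt α y → P y
    -- Claim A: terms with p.2 ≠ e j are clearable
    have claimA : ∀ (j : Fin r), ∀ p ∈ Finset.HasAntidiagonal.antidiagonal α, p.2 ≠ e j →
        Clr C lc (MvPowerSeries.coeff p.1 (q j) * MvPowerSeries.coeff p.2 (g j)) := by
      intro j p hp hne
      by_cases h1 : MvPowerSeries.coeff p.1 (q j) = 0
      · rw [h1, zero_mul]; exact clr_zero
      by_cases h2 : MvPowerSeries.coeff p.2 (g j) = 0
      · rw [h2, mul_zero]; exact clr_zero
      have hlt2 : lt p.2 (e j) := (he j).2 p.2 h2 hne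
      have hαlt : lt α (p.1 + e j) := by
        have h3 := hlt.add_right _ _ p.1 hlt2
        rw [Finset.HasAntidiagonal.mem_antidiagonal] at hp
        rwa [add_comm p.2 p.1, add_comm (e j) p.1, hp] at h3
      exact clr_mul_mem ((IH _ hαlt).2 j p.1 rfl) (hgC j p.2)
    -- if coeff at a pair with p.2 = e j is nonzero, then α ∈ Delta e j
    have claimB : ∀ (j : Fin r) (β : Fin n →₀ ℕ), β + e j = α →
        MvPowerSeries.coeff β (q j) ≠ 0 → α ∈ Delta e j := by
      intro j β hβ h0
      rcases hq j with h | h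
      · exact absurd (by rw [h]; simp) h0
      · rw [← hβ]; exact h β h0
    constructor
    · -- remainder coefficient
      by_cases hR0 : MvPowerSeries.coeff α R = 0
      · rw [hR0]; exact clr_zero
      have hRbar : α ∈ DeltaBar e := by
        rcases hR with h | h
        · exact absurd (by rw [h]; simp) hR0
        · exact h hR0
      have hterm : ∀ (j : Fin r), ∀ p ∈ Finset.HasAntidiagonal.antidiagonal α,
          Clr C lc (MvPowerSeries.coeff p.1 (q j) * MvPowerSeries.coeff p.2 (g j)) := by
        intro j p hp
        by_cases hpe : p.2 = e j
        · -- then the q-coefficient must vanish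
          have hβ : p.1 + e j = α := by
            rw [← hpe]; exact Finset.HasAntidiagonal.mem_antidiagonal.mp hp
          by_cases h0 : MvPowerSeries.coeff p.1 (q j) = 0
          · rw [h0, zero_mul]; exact clr_zero
          · exact absurd (Set.mem_iUnion.mpr ⟨j, (claimB j p.1 hβ h0).1⟩) hRbar
        · exact claimA j p hp hpe
      have : MvPowerSeries.coeff α R = MvPowerSeries.coeff α f -
          (∑ j, ∑ p ∈ Finset.HasAntidiagonal.antidiagonal α,
            MvPowerSeries.coeff p.1 (q j) * MvPowerSeries.coeff p.2 (g j)) := by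
        rw [eqn α]; ring
      rw [this]
      exact clr_sub hlcC (clr_of_mem (hfC α))
        (clr_sum hlcC _ _ fun j _ => clr_sum hlcC _ _ fun p hp => hterm j p hp)
    · -- quotient coefficients
      intro i β hβ
      by_cases hq0 : MvPowerSeries.coeff β (q i) = 0
      · rw [hq0]; exact clr_zero
      have hαΔ : α ∈ Delta e i := claimB i β hβ hq0
      have hRα : MvPowerSeries.coeff α R = 0 := by
        rcases hR with h | h
        · rw [h]; simp
        · by_contra h0
          exact h h0 (Set.mem_iUnion.mpr ⟨i, hαΔ.1⟩)
      -- the distinguished pair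
      set p0 : (Fin n →₀ ℕ) × (Fin n →₀ ℕ) := (β, e i) with hp0
      have hp0mem : p0 ∈ Finset.HasAntidiagonal.antidiagonal α := Finset.HasAntidiagonal.mem_antidiagonal.mpr hβ
      -- all other terms are clearable
      have hrest : ∀ p ∈ (Finset.HasAntidiagonal.antidiagonal α).erase p0,
          Clr C lc (MvPowerSeries.coeff p.1 (q i) * MvPowerSeries.coeff p.2 (g i)) := by
        intro p hp
        obtain ⟨hne, hpmem⟩ := Finset.mem_erase.mp hp
        by_cases hpe : p.2 = e i
        · exfalso
          apply hne
          have h1 : p.1 + e i = α := by rw [← hpe]; exact Finset.HasAntidiagonal.mem_antidiagonal.mp hpmem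
          have h2 : p.1 = β := by
            have := h1.trans hβ.symm
            exact add_right_cancel this
          rw [hp0, ← h2, ← hpe]
        · exact claimA i p hpmem hpe
      -- terms for j ≠ i are all clearable
      have hother : ∀ j ∈ Finset.univ.erase i,
          Clr C lc (∑ p ∈ Finset.HasAntidiagonal.antidiagonal α,
            MvPowerSeries.coeff p.1 (q j) * MvPowerSeries.coeff p.2 (g j)) := by
        intro j hj
        have hji : j ≠ i := (Finset.mem_erase.mp hj).1
        refine clr_sum hlcC _ _ fun p hp => ?_
        by_cases hpe : p.2 = e j
        · have h1 : p.1 + e j = α := by rw [← hpe]; exact Finset.HasAntidiagonal.mem_antidiagonal.mp hp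
          by_cases h0 : MvPowerSeries.coeff p.1 (q j) = 0
          · rw [h0, zero_mul]; exact clr_zero
          · exact absurd (claimB j p.1 h1 h0) (hDelta_disj i j (Ne.symm hji) α hαΔ)
        · exact claimA j p hp hpe
      -- extract the distinguished term from the equation
      have hsplit : MvPowerSeries.coeff β (q i) * lc i =
          MvPowerSeries.coeff α f
          - (∑ p ∈ (Finset.HasAntidiagonal.antidiagonal α).erase p0,
              MvPowerSeries.coeff p.1 (q i) * MvPowerSeries.coeff p.2 (g i))
          - (∑ j ∈ Finset.univ.erase i, ∑ p ∈ Finset.HasAntidiagonal.antidiagonal α,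
              MvPowerSeries.coeff p.1 (q j) * MvPowerSeries.coeff p.2 (g j)) := by
        have e1 : (∑ j, ∑ p ∈ Finset.HasAntidiagonal.antidiagonal α,
            MvPowerSeries.coeff p.1 (q j) * MvPowerSeries.coeff p.2 (g j)) =
            (∑ p ∈ Finset.HasAntidiagonal.antidiagonal α,
              MvPowerSeries.coeff p.1 (q i) * MvPowerSeries.coeff p.2 (g i))
            + ∑ j ∈ Finset.univ.erase i, ∑ p ∈ Finset.HasAntidiagonal.antidiagonal α,
              MvPowerSeries.coeff p.1 (q j) * MvPowerSeries.coeff p.2 (g j) :=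
          (Finset.add_sum_erase _ _ (Finset.mem_univ i)).symm
        have e2 : (∑ p ∈ Finset.HasAntidiagonal.antidiagonal α,
            MvPowerSeries.coeff p.1 (q i) * MvPowerSeries.coeff p.2 (g i)) =
            MvPowerSeries.coeff p0.1 (q i) * MvPowerSeries.coeff p0.2 (g i)
            + ∑ p ∈ (Finset.HasAntidiagonal.antidiagonal α).erase p0,
              MvPowerSeries.coeff p.1 (q i) * MvPowerSeries.coeff p.2 (g i) :=
          (Finset.add_sum_erase _ _ hp0mem).symm
        have e3 := eqn α
        rw [e1, e2, hRα] at e3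
        have hp01 : p0.1 = β := rfl
        have hp02 : p0.2 = e i := rfl
        rw [hp01, hp02] at e3
        simp only [hlc_def]
        linear_combination -e3
      have : Clr C lc (MvPowerSeries.coeff β (q i) * lc i) := by
        rw [hsplit]
        exact clr_sub hlcC
          (clr_sub hlcC (clr_of_mem (hfC α)) (clr_sum hlcC _ _ hrest))
          (clr_sum hlcC _ _ hother)
      exact clr_of_mul_lc hlcC i this
  intro α
  exact ⟨(key α).1, fun i => (key (α + e i)).2 i α rfl⟩
end
end

section
/- Let k be a field, ≺ a local monomial order on ℕ^n, J an ideal of k[[x]], and g_1,…,g_r nonzero elements of J. Let Δ_1,…,Δ_r, Δ̄ be the partition of ℕ^n associated to the exp(g_j). Then the following are equivalent: (a) every f ∈ J can be written f = ∑_{j=1}^r q_j g_j with q_j ∈ k[[x]] and, for each j, q_j = 0 or ND(q_j) + exp(g_j) ⊆ Δ_j (i.e. the remainder of the division of f by g_1,…,g_r is zero); (b) {g_1,…,g_r} is a standard basis of J, i.e. Exp(J) = ⋃_{j=1}^r (exp(g_j)+ℕ^n). -/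
open MvPowerSeries

noncomputable section

section Aux

variable {n : ℕ} {k : Type} [Field k]
variable {lt : (Fin n →₀ ℕ) → (Fin n →₀ ℕ) → Prop}

theorem aux_wf (hlt : IsLocalMonomialOrder lt) :
    WellFounded (flip lt : (Fin n →₀ ℕ) → (Fin n →₀ ℕ) → Prop) := by
  haveI : IsIrrefl (Fin n →₀ ℕ) (flip lt) := ⟨fun a => hlt.irrefl a⟩
  haveI : IsTrans (Fin n →₀ ℕ) (flip lt) := ⟨fun a b c h1 h2 => hlt.trans c b a h2 h1⟩
  haveI : IsStrictOrder (Fin n →₀ ℕ) (flip lt) := { }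
  rw [RelEmbedding.wellFounded_iff_isEmpty]
  constructor
  intro f
  obtain ⟨i, j, hij, hle⟩ :=
    (Set.isPWO_of_wellQuasiOrderedLE (Set.univ : Set (Fin n →₀ ℕ))).exists_lt (f := fun m => f m) (fun _ => Set.mem_univ _)
  have h1 : lt (f i) (f j) := f.map_rel_iff.mpr hij
  obtain ⟨γ, hγ⟩ := le_iff_exists_add.mp hle
  rcases hlt.le_zero γ with h0 | h0
  · rw [h0, add_zero] at hγ
    rw [hγ] at h1
    exact hlt.irrefl _ h1
  · have h2 : lt (γ + f i) (0 + f i) := hlt.add_right γ 0 (f i) h0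
    rw [zero_add, add_comm γ (f i), ← hγ] at h2
    exact hlt.irrefl _ (hlt.trans _ _ _ h1 h2)

theorem aux_max (hlt : IsLocalMonomialOrder lt) (S : Set (Fin n →₀ ℕ)) (hS : S.Nonempty) :
    ∃ m ∈ S, ∀ a ∈ S, a ≠ m → lt a m := by
  obtain ⟨m, hm, hmin⟩ := (aux_wf hlt).has_min S hS
  refine ⟨m, hm, fun a ha hne => ?_⟩
  rcases hlt.total a m with h | h | h
  · exact h
  · exact absurd h hne
  · exact absurd h (hmin a ha)

theorem exists_isExp (hlt : IsLocalMonomialOrder lt) {f : MvPowerSeries (Fin n) k}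
    (hf : f ≠ 0) : ∃ m, IsExp lt f m := by
  have hne : (ND f).Nonempty := by
    by_contra h
    rw [Set.not_nonempty_iff_eq_empty] at h
    apply hf
    ext α
    have : α ∉ ND f := h ▸ Set.notMem_empty α
    simpa [ND] using this
  obtain ⟨m, hm, hmax⟩ := aux_max hlt (ND f) hne
  exact ⟨m, hm, hmax⟩

theorem isExp_unique (hlt : IsLocalMonomialOrder lt) {f : MvPowerSeries (Fin n) k}
    {a b : Fin n →₀ ℕ} (ha : IsExp lt f a) (hb : IsExp lt f b) : a = b := by
  by_contra hne
  have h1 : lt a b := hb.2 a ha.1 hne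
  have h2 : lt b a := ha.2 b hb.1 (Ne.symm hne)
  exact hlt.irrefl _ (hlt.trans _ _ _ h1 h2)

theorem aux_le_trans (hlt : IsLocalMonomialOrder lt) {a b c : Fin n →₀ ℕ}
    (h1 : a = b ∨ lt a b) (h2 : b = c ∨ lt b c) : a = c ∨ lt a c := by
  rcases h1 with rfl | h1
  · exact h2
  · rcases h2 with rfl | h2
    · exact Or.inr h1
    · exact Or.inr (hlt.trans _ _ _ h1 h2)

theorem aux_add_le (hlt : IsLocalMonomialOrder lt) {a b c d : Fin n →₀ ℕ}
    (h1 : a = b ∨ lt a b) (h2 : c = d ∨ lt c d) :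
    a + c = b + d ∨ lt (a + c) (b + d) := by
  have s1 : a + c = b + c ∨ lt (a + c) (b + c) := by
    rcases h1 with rfl | h1
    · exact Or.inl rfl
    · exact Or.inr (hlt.add_right _ _ _ h1)
  have s2 : b + c = b + d ∨ lt (b + c) (b + d) := by
    rcases h2 with rfl | h2
    · exact Or.inl rfl
    · refine Or.inr ?_
      have := hlt.add_right c d b h2
      rwa [add_comm c b, add_comm d b] at this
  exact aux_le_trans hlt s1 s2

theorem aux_add_lt_left (hlt : IsLocalMonomialOrder lt) {a b c d : Fin n →₀ ℕ}
    (h1 : lt a b) (h2 : c = d ∨ lt c d) : lt (a + c) (b + d) := by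
  have s1 : lt (a + c) (b + c) := hlt.add_right _ _ _ h1
  rcases h2 with rfl | h2
  · exact s1
  · have s2 : lt (b + c) (b + d) := by
      have := hlt.add_right c d b h2
      rwa [add_comm c b, add_comm d b] at this
    exact hlt.trans _ _ _ s1 s2

theorem aux_le_of_isExp (hlt : IsLocalMonomialOrder lt) {f : MvPowerSeries (Fin n) k}
    {a β : Fin n →₀ ℕ} (hf : IsExp lt f a) (hβ : β ∈ ND f) : β = a ∨ lt β a := by
  by_cases h : β = a
  · exact Or.inl h
  · exact Or.inr (hf.2 β hβ h)

end Aux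

section Aux2

variable {n : ℕ} {k : Type} [Field k]
variable {lt : (Fin n →₀ ℕ) → (Fin n →₀ ℕ) → Prop}

theorem exists_decomp {f g : MvPowerSeries (Fin n) k} {β : Fin n →₀ ℕ}
    (h : β ∈ ND (f * g)) :
    ∃ p q : Fin n →₀ ℕ, p + q = β ∧ p ∈ ND f ∧ q ∈ ND g := by
  classical
  have h' : MvPowerSeries.coeff β (f * g) ≠ 0 := h
  rw [coeff_mul (n := β) (φ := f) (ψ := g)] at h'
  obtain ⟨p, hp, hne⟩ := Finset.exists_ne_zero_of_sum_ne_zero h'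
  refine ⟨p.1, p.2, Finset.HasAntidiagonal.mem_antidiagonal.mp hp, ?_, ?_⟩
  · exact fun h0 => hne (by rw [show MvPowerSeries.coeff p.1 f = 0 from h0, zero_mul])
  · exact fun h0 => hne (by rw [show MvPowerSeries.coeff p.2 g = 0 from h0, mul_zero])

theorem isExp_mul (hlt : IsLocalMonomialOrder lt) {f g : MvPowerSeries (Fin n) k}
    {a b : Fin n →₀ ℕ} (hf : IsExp lt f a) (hg : IsExp lt g b) :
    IsExp lt (f * g) (a + b) := by
  classical
  constructor
  · show MvPowerSeries.coeff (a + b) (f * g) ≠ 0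
    rw [coeff_mul (n := a + b) (φ := f) (ψ := g)]
    have hmain : ∑ p ∈ Finset.HasAntidiagonal.antidiagonal (a + b),
        MvPowerSeries.coeff p.1 f * MvPowerSeries.coeff p.2 g
        = MvPowerSeries.coeff a f * MvPowerSeries.coeff b g := by
      apply Finset.sum_eq_single_of_mem (a, b) (Finset.HasAntidiagonal.mem_antidiagonal.mpr rfl)
      rintro p hp hpne
      rcases eq_or_ne (MvPowerSeries.coeff p.1 f) 0 with h1 | h1
      · rw [h1, zero_mul]
      rcases eq_or_ne (MvPowerSeries.coeff p.2 g) 0 with h2 | h2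
      · rw [h2, mul_zero]
      exfalso
      have hps : p.1 + p.2 = a + b := Finset.HasAntidiagonal.mem_antidiagonal.mp hp
      have le1 := aux_le_of_isExp hlt hf (h1 : p.1 ∈ ND f)
      have le2 := aux_le_of_isExp hlt hg (h2 : p.2 ∈ ND g)
      rcases le1 with he1 | hlt1
      · rcases le2 with he2 | hlt2
        · exact hpne (Prod.ext he1 he2)
        · have := aux_add_lt_left hlt hlt2 (Or.inl he1 : p.1 = a ∨ lt p.1 a)
          rw [add_comm p.2 p.1, add_comm b a, hps] at this
          exact hlt.irrefl _ this
      · have := aux_add_lt_left hlt hlt1 le2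
        rw [hps] at this
        exact hlt.irrefl _ this
    rw [hmain]
    exact mul_ne_zero hf.1 hg.1
  · intro β hβ hne
    obtain ⟨p, q, hpq, hp, hq⟩ := exists_decomp hβ
    have := aux_add_le hlt (aux_le_of_isExp hlt hf hp) (aux_le_of_isExp hlt hg hq)
    rw [hpq] at this
    rcases this with h | h
    · exact absurd h hne
    · exact h

theorem isExp_monomial {γ : Fin n →₀ ℕ} :
    IsExp lt ((MvPowerSeries.monomial γ) (1 : k)) γ := by
  classical
  constructor
  · show MvPowerSeries.coeff γ _ ≠ 0
    rw [MvPowerSeries.coeff_monomial, if_pos rfl]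
    exact one_ne_zero
  · intro β hβ hne
    exfalso
    apply hβ
    show MvPowerSeries.coeff β _ = 0
    rw [MvPowerSeries.coeff_monomial, if_neg hne]

theorem mem_upSet {e α : Fin n →₀ ℕ} : α ∈ upSet e ↔ e ≤ α := by
  constructor
  · rintro ⟨γ, rfl⟩
    exact le_iff_exists_add.mpr ⟨γ, rfl⟩
  · intro h
    obtain ⟨γ, hγ⟩ := le_iff_exists_add.mp h
    exact ⟨γ, hγ⟩

theorem delta_disjoint {r : ℕ} (e : Fin r → (Fin n →₀ ℕ)) {i j : Fin r} (hij : i ≠ j)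
    {α : Fin n →₀ ℕ} (hi : α ∈ Delta e i) (hj : α ∈ Delta e j) : False := by
  rcases lt_or_gt_of_ne hij with h | h
  · exact hj.2 (Set.mem_iUnion₂.mpr ⟨i, h, hi.1⟩)
  · exact hi.2 (Set.mem_iUnion₂.mpr ⟨j, h, hj.1⟩)

theorem delta_cover {r : ℕ} (e : Fin r → (Fin n →₀ ℕ)) {α : Fin n →₀ ℕ}
    (h : α ∈ ⋃ j, upSet (e j)) : ∃ j, α ∈ Delta e j := by
  obtain ⟨j, hj⟩ := Set.mem_iUnion.mp h
  have hS : {i : Fin r | α ∈ upSet (e i)}.Nonempty := ⟨j, hj⟩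
  obtain ⟨j₀, hj₀, hmin⟩ : ∃ a ∈ {i : Fin r | α ∈ upSet (e i)},
      ∀ a' ∈ {i : Fin r | α ∈ upSet (e i)}, id a' ≤ id a → id a = id a' := by
    obtain ⟨a, ha, h⟩ := Set.exists_min_image _ id (Set.toFinite _) hS
    exact ⟨a, ha, fun b hb hba => le_antisymm (h b hb) hba⟩
  refine ⟨j₀, hj₀, fun hmem => ?_⟩
  obtain ⟨i, hi, hmemi⟩ := Set.mem_iUnion₂.mp hmem
  exact absurd (hmin i hmemi (le_of_lt hi)).symm (by simpa using ne_of_lt hi)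

end Aux2

section Division

variable {n : ℕ} {k : Type} [Field k]
variable {lt : (Fin n →₀ ℕ) → (Fin n →₀ ℕ) → Prop}

theorem division (hlt : IsLocalMonomialOrder lt) {r : ℕ}
    (g : Fin r → MvPowerSeries (Fin n) k) (e : Fin r → (Fin n →₀ ℕ))
    (he : ∀ j, IsExp lt (g j) (e j)) (f : MvPowerSeries (Fin n) k) :
    ∃ q R, f = (∑ j, q j * g j) + R ∧ QuotCond e q ∧ RemCond e R := by
  classical
  have wf := aux_wf hlt
  set F : ∀ α : Fin n →₀ ℕ, (∀ x, flip lt x α → k) → k := fun α rec =>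
    MvPowerSeries.coeff α f - ∑ j : Fin r, ∑ p ∈ Finset.HasAntidiagonal.antidiagonal α,
      if h : lt α (p.1 + e j) then
        (if p.1 + e j ∈ Delta e j then rec (p.1 + e j) h / MvPowerSeries.coeff (e j) (g j)
          else 0) * MvPowerSeries.coeff p.2 (g j)
      else 0 with hF
  set c : (Fin n →₀ ℕ) → k := wf.fix F with hcdef
  have hc : ∀ α, c α = MvPowerSeries.coeff α f -
      ∑ j : Fin r, ∑ p ∈ Finset.HasAntidiagonal.antidiagonal α,
      if lt α (p.1 + e j) then
        (if p.1 + e j ∈ Delta e j then c (p.1 + e j) / MvPowerSeries.coeff (e j) (g j)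
          else 0) * MvPowerSeries.coeff p.2 (g j)
      else 0 := by
    intro α
    have := wf.fix_eq F α
    rw [hcdef, this, hF]
    simp only [dite_eq_ite]
  set q : Fin r → MvPowerSeries (Fin n) k := fun j =>
    (fun δ => if δ + e j ∈ Delta e j then c (δ + e j) / MvPowerSeries.coeff (e j) (g j)
      else 0 : MvPowerSeries (Fin n) k) with hq
  set R : MvPowerSeries (Fin n) k :=
    (fun α => if α ∈ DeltaBar e then c α else 0 : MvPowerSeries (Fin n) k) with hR
  have hqcoeff : ∀ j δ, MvPowerSeries.coeff δ (q j) =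
      if δ + e j ∈ Delta e j then c (δ + e j) / MvPowerSeries.coeff (e j) (g j) else 0 := by
    intro j δ
    rw [hq]; rfl
  have hRcoeff : ∀ α, MvPowerSeries.coeff α R =
      if α ∈ DeltaBar e then c α else 0 := by
    intro α
    rw [hR]; rfl
  have hlc : ∀ j, MvPowerSeries.coeff (e j) (g j) ≠ 0 := fun j => (he j).1
  -- main per-j identity
  have hmul : ∀ (j : Fin r) (α : Fin n →₀ ℕ),
      MvPowerSeries.coeff α (q j * g j) =
      (∑ p ∈ Finset.HasAntidiagonal.antidiagonal α,
        if lt α (p.1 + e j) then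
          (if p.1 + e j ∈ Delta e j then c (p.1 + e j) / MvPowerSeries.coeff (e j) (g j)
            else 0) * MvPowerSeries.coeff p.2 (g j)
        else 0)
      + (if α ∈ Delta e j then c α else 0) := by
    intro j α
    rw [coeff_mul (n := α) (φ := q j) (ψ := g j)]
    have hdiff : ∀ p ∈ Finset.HasAntidiagonal.antidiagonal α,
        MvPowerSeries.coeff p.1 (q j) * MvPowerSeries.coeff p.2 (g j) -
        (if lt α (p.1 + e j) then
          (if p.1 + e j ∈ Delta e j then c (p.1 + e j) / MvPowerSeries.coeff (e j) (g j)
            else 0) * MvPowerSeries.coeff p.2 (g j)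
        else 0) =
        if p = (α - e j, e j) ∧ α ∈ Delta e j then c α else 0 := by
      rintro p hp
      have hps : p.1 + p.2 = α := Finset.HasAntidiagonal.mem_antidiagonal.mp hp
      by_cases hcond : lt α (p.1 + e j)
      · rw [if_pos hcond, hqcoeff, sub_self]
        rw [if_neg]
        rintro ⟨rfl, hΔ⟩
        -- p = (α - e j, e j) : then p.1 + e j = α since p.1 + p.2 = α and p.2 = e j
        simp only at hps hcond
        rw [hps] at hcond
        exact hlt.irrefl _ hcond
      · rw [if_neg hcond, sub_zero, hqcoeff]
        rcases eq_or_ne (MvPowerSeries.coeff p.2 (g j)) 0 with hg2 | hg2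
        · rw [hg2, mul_zero]
          rw [if_neg]
          rintro ⟨rfl, hΔ⟩
          exact (he j).1 (by simpa using hg2)
        · -- p.2 ∈ ND (g j)
          rcases aux_le_of_isExp hlt (he j) (hg2 : p.2 ∈ ND (g j)) with h2 | h2
          · -- p.2 = e j, so p.1 + e j = α
            have hp1 : p.1 + e j = α := by rw [← h2]; exact hps
            have hpeq : p = (α - e j, e j) := by
              have : p.1 = α - e j := by
                rw [← hp1]; exact (add_tsub_cancel_right p.1 (e j)).symm
              exact Prod.ext this h2
            rw [hp1]
            by_cases hΔ : α ∈ Delta e j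
            · rw [if_pos hΔ, if_pos ⟨hpeq, hΔ⟩, h2]
              exact div_mul_cancel₀ _ (hlc j)
            · rw [if_neg hΔ, zero_mul, if_neg (fun h => hΔ h.2)]
          · -- lt p.2 (e j) : contradiction with ¬ lt α (p.1 + e j)
            exfalso
            apply hcond
            have := hlt.add_right p.2 (e j) p.1 h2
            rwa [add_comm p.2 p.1, add_comm (e j) p.1, hps] at this
    -- sum the difference identity
    have hsum : ∑ p ∈ Finset.HasAntidiagonal.antidiagonal α,
        (MvPowerSeries.coeff p.1 (q j) * MvPowerSeries.coeff p.2 (g j) -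
        (if lt α (p.1 + e j) then
          (if p.1 + e j ∈ Delta e j then c (p.1 + e j) / MvPowerSeries.coeff (e j) (g j)
            else 0) * MvPowerSeries.coeff p.2 (g j)
        else 0)) = if α ∈ Delta e j then c α else 0 := by
      rw [Finset.sum_congr rfl hdiff]
      by_cases hΔ : α ∈ Delta e j
      · have hle : e j ≤ α := mem_upSet.mp hΔ.1
        have hmem : (α - e j, e j) ∈ Finset.HasAntidiagonal.antidiagonal α :=
          Finset.HasAntidiagonal.mem_antidiagonal.mpr (tsub_add_cancel_of_le hle)
        rw [Finset.sum_eq_single_of_mem (α - e j, e j) hmem]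
        · rw [if_pos ⟨rfl, hΔ⟩, if_pos hΔ]
        · intro p _ hpne
          rw [if_neg (fun h => hpne h.1)]
      · rw [if_neg hΔ, Finset.sum_eq_zero]
        intro p _
        rw [if_neg (fun h => hΔ h.2)]
    rw [Finset.sum_sub_distrib] at hsum
    linear_combination hsum
  -- partition identity
  have hpart : ∀ α, (∑ j : Fin r, if α ∈ Delta e j then c α else 0)
      + (if α ∈ DeltaBar e then c α else 0) = c α := by
    intro α
    by_cases hbar : α ∈ DeltaBar e
    · rw [if_pos hbar, Finset.sum_eq_zero, zero_add]
      intro j _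
      rw [if_neg]
      intro hΔ
      exact hbar (Set.mem_iUnion.mpr ⟨j, hΔ.1⟩)
    · rw [if_neg hbar, add_zero]
      have : α ∈ ⋃ i, upSet (e i) := by
        by_contra h
        exact hbar h
      obtain ⟨j₀, hj₀⟩ := delta_cover e this
      rw [Finset.sum_eq_single_of_mem j₀ (Finset.mem_univ j₀)]
      · rw [if_pos hj₀]
      · intro i _ hine
        rw [if_neg (fun hi => delta_disjoint e hine hi hj₀)]
  refine ⟨q, R, ?_, ?_, ?_⟩
  · apply MvPowerSeries.ext
    intro α
    rw [map_add, map_sum]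
    have : ∑ j : Fin r, MvPowerSeries.coeff α (q j * g j) =
        (∑ j : Fin r, ∑ p ∈ Finset.HasAntidiagonal.antidiagonal α,
          if lt α (p.1 + e j) then
            (if p.1 + e j ∈ Delta e j then c (p.1 + e j) / MvPowerSeries.coeff (e j) (g j)
              else 0) * MvPowerSeries.coeff p.2 (g j)
          else 0)
        + ∑ j : Fin r, (if α ∈ Delta e j then c α else 0) := by
      rw [← Finset.sum_add_distrib]
      exact Finset.sum_congr rfl fun j _ => hmul j α
    rw [this, hRcoeff]
    have hcα := hc α
    have hp := hpart α
    linear_combination -hcα - hp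
  · intro j
    right
    intro δ hδ
    have : MvPowerSeries.coeff δ (q j) ≠ 0 := hδ
    rw [hqcoeff] at this
    by_contra h
    rw [if_neg h] at this
    exact this rfl
  · right
    intro α hα
    have : MvPowerSeries.coeff α R ≠ 0 := hα
    rw [hRcoeff] at this
    by_contra h
    rw [if_neg h] at this
    exact this rfl

end Division

/-- for nonzero `g_1, …, g_r` in an ideal `J ⊆ k[[x]]`, the following are
equivalent: (a) every `f ∈ J` has a standard writing `f = ∑ q_j g_j` with each `q_j = 0`
or `ND(q_j) + exp(g_j) ⊆ Δ_j` (i.e. the remainder of the division of `f` by the `g_j` is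
zero); (b) `{g_1, …, g_r}` is a standard basis of `J`, i.e.
`Exp(J) = ⋃_j (exp(g_j) + ℕ^n)`. -/
theorem remainder_zero_iff_standardBasis {n : ℕ} (hn : 1 ≤ n) (k : Type) [Field k]
    (lt : (Fin n →₀ ℕ) → (Fin n →₀ ℕ) → Prop) (hlt : IsLocalMonomialOrder lt)
    (J : Ideal (MvPowerSeries (Fin n) k))
    {r : ℕ} (g : Fin r → MvPowerSeries (Fin n) k)
    (hgJ : ∀ j, g j ∈ J) (hg : ∀ j, g j ≠ 0)
    (e : Fin r → (Fin n →₀ ℕ)) (he : ∀ j, IsExp lt (g j) (e j)) :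
    (∀ f ∈ J, ∃ q : Fin r → MvPowerSeries (Fin n) k,
        f = (∑ j, q j * g j) ∧ QuotCond e q) ↔
      ExpSet lt J = ⋃ j, upSet (e j) := by
  constructor
  · -- (a) → (b)
    intro ha
    apply Set.Subset.antisymm
    · -- ExpSet ⊆ ⋃ upSet
      rintro α ⟨f, hfJ, hfα⟩
      obtain ⟨q, hfq, hQC⟩ := ha f hfJ
      have hf0 : f ≠ 0 := fun h => hfα.1 (by rw [h]; simp)
      -- the set of leading exponents of the nonzero products q j * g j
      set S : Set (Fin n →₀ ℕ) :=
        {m | ∃ j, q j ≠ 0 ∧ IsExp lt (q j * g j) m} with hS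
      have hSne : S.Nonempty := by
        have : ∃ j, q j ≠ 0 := by
          by_contra hq0
          push_neg at hq0
          apply hf0
          rw [hfq, Finset.sum_eq_zero]
          intro j _
          rw [hq0 j, zero_mul]
        obtain ⟨j, hj⟩ := this
        obtain ⟨b, hb⟩ := exists_isExp hlt hj
        exact ⟨b + e j, j, hj, isExp_mul hlt hb (he j)⟩
      obtain ⟨m, hmS, hmax⟩ := aux_max hlt S hSne
      obtain ⟨j₀, hqj₀, hexp₀⟩ := hmS
      -- m ∈ Delta e j₀
      obtain ⟨b₀, hb₀⟩ := exists_isExp hlt hqj₀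
      have hmeq : m = b₀ + e j₀ := isExp_unique hlt hexp₀ (isExp_mul hlt hb₀ (he j₀))
      have hmΔ : m ∈ Delta e j₀ := by
        rcases hQC j₀ with h0 | h0
        · exact absurd h0 hqj₀
        · rw [hmeq]; exact h0 b₀ hb₀.1
      -- IsExp f m
      have hfm : IsExp lt f m := by
        constructor
        · show MvPowerSeries.coeff m f ≠ 0
          rw [hfq, map_sum]
          rw [Finset.sum_eq_single_of_mem j₀ (Finset.mem_univ j₀)]
          · exact hexp₀.1
          · intro j _ hjne
            by_cases hq0 : q j = 0
            · rw [hq0, zero_mul, map_zero]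
            by_contra hc0
            obtain ⟨b, hb⟩ := exists_isExp hlt hq0
            have hbm : b + e j ∈ S := ⟨j, hq0, isExp_mul hlt hb (he j)⟩
            have hbΔ : b + e j ∈ Delta e j := by
              rcases hQC j with h0 | h0
              · exact absurd h0 hq0
              · exact h0 b hb.1
            have hne : b + e j ≠ m := by
              intro hcontra
              exact delta_disjoint e hjne (hcontra ▸ hbΔ) hmΔ
            have h1 : lt (b + e j) m := hmax _ hbm hne
            have h2 := aux_le_of_isExp hlt (isExp_mul hlt hb (he j)) (hc0 : m ∈ ND (q j * g j))
            rcases h2 with h2 | h2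
            · exact hne (h2.symm)
            · exact hlt.irrefl _ (hlt.trans _ _ _ h1 h2)
        · intro β hβ hβne
          have hβc : MvPowerSeries.coeff β f ≠ 0 := hβ
          rw [hfq, map_sum] at hβc
          obtain ⟨j, _, hj0⟩ := Finset.exists_ne_zero_of_sum_ne_zero hβc
          have hq0 : q j ≠ 0 := by
            intro h
            rw [h, zero_mul, map_zero] at hj0
            exact hj0 rfl
          obtain ⟨b, hb⟩ := exists_isExp hlt hq0
          have hbm : b + e j ∈ S := ⟨j, hq0, isExp_mul hlt hb (he j)⟩
          have le1 := aux_le_of_isExp hlt (isExp_mul hlt hb (he j)) (hj0 : β ∈ ND (q j * g j))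
          have le2 : b + e j = m ∨ lt (b + e j) m := by
            by_cases hbe : b + e j = m
            · exact Or.inl hbe
            · exact Or.inr (hmax _ hbm hbe)
          rcases aux_le_trans hlt le1 le2 with h | h
          · exact absurd h hβne
          · exact h
      have : α = m := isExp_unique hlt hfα hfm
      rw [this]
      exact Set.mem_iUnion.mpr ⟨j₀, hmΔ.1⟩
    · -- ⋃ upSet ⊆ ExpSet
      rintro α hα
      obtain ⟨j, hj⟩ := Set.mem_iUnion.mp hα
      obtain ⟨γ, rfl⟩ := hj
      refine ⟨(MvPowerSeries.monomial γ) (1 : k) * g j, J.mul_mem_left _ (hgJ j), ?_⟩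
      have := isExp_mul hlt (isExp_monomial (lt := lt) (γ := γ)) (he j)
      rwa [add_comm γ (e j)] at this
  · -- (b) → (a)
    intro hb f hfJ
    obtain ⟨q, R, heq, hQC, hRC⟩ := division hlt g e he f
    have hRJ : R ∈ J := by
      have hR : R = f - ∑ j, q j * g j := by rw [heq]; ring
      rw [hR]
      exact J.sub_mem hfJ (Ideal.sum_mem J fun j _ => J.mul_mem_left _ (hgJ j))
    have hR0 : R = 0 := by
      by_contra hR0
      obtain ⟨m, hm⟩ := exists_isExp hlt hR0
      have hmE : m ∈ ExpSet lt J := ⟨R, hRJ, hm⟩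
      rw [hb] at hmE
      rcases hRC with h | h
      · exact hR0 h
      · exact (h hm.1) hmE
    refine ⟨q, ?_, hQC⟩
    rw [heq, hR0, add_zero]
end
end

section
/- Let k be a field, ≺ a local monomial order on ℕ^n, I an ideal of the polynomial ring k[x], and G a finite set of nonzero elements of I such that Exp_≺(I) = ⋃_{g∈G}(exp(g)+ℕ^n). Then G is a ≺-standard basis of the extended ideal Î = k[[x]]·I: every nonzero f ∈ Î can be written f = ∑_{g∈G} q_g g with q_g ∈ k[[x]] and, for each g with q_g ≠ 0, exp(q_g g) ≼ exp(f). -/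
open MvPowerSeries

noncomputable section

/-- `e` is the `lt`-greatest exponent of the nonzero polynomial `f`. -/
def IsExpP {n : ℕ} {k : Type*} [CommSemiring k]
    (lt : (Fin n →₀ ℕ) → (Fin n →₀ ℕ) → Prop)
    (f : MvPolynomial (Fin n) k) (e : Fin n →₀ ℕ) : Prop :=
  e ∈ f.support ∧ ∀ β ∈ f.support, β ≠ e → lt β e

/-- The set of `lt`-leading exponents of the nonzero elements of a polynomial ideal. -/
def ExpSetP {n : ℕ} {k : Type*} [CommSemiring k]
    (lt : (Fin n →₀ ℕ) → (Fin n →₀ ℕ) → Prop)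
    (I : Ideal (MvPolynomial (Fin n) k)) : Set (Fin n →₀ ℕ) :=
  {e | ∃ f ∈ I, IsExpP lt f e}
namespace SBaux

open Classical in
theorem dec_em' : True := trivial

section Order

variable {n : ℕ} {lt : (Fin n →₀ ℕ) → (Fin n →₀ ℕ) → Prop}

theorem lt_of_le_of_ne (hlt : IsLocalMonomialOrder lt) {a b : Fin n →₀ ℕ}
    (h : a ≤ b) (hne : b ≠ a) : lt b a := by
  obtain ⟨c, rfl⟩ := le_iff_exists_add.mp h
  have hc : c ≠ 0 := by rintro rfl; simp at hne
  rcases hlt.le_zero c with h0 | h0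
  · exact absurd h0 hc
  · have h2 := hlt.add_right c 0 a h0
    rwa [zero_add, add_comm] at h2

theorem exists_greatest (hlt : IsLocalMonomialOrder lt) {S : Set (Fin n →₀ ℕ)}
    (hS : S.Nonempty) : ∃ m ∈ S, ∀ x ∈ S, x ≠ m → lt x m := by
  classical
  by_contra hcon
  push_neg at hcon
  have step : ∀ a : {x // x ∈ S}, ∃ b : {x // x ∈ S}, lt a.1 b.1 := by
    rintro ⟨a, ha⟩
    obtain ⟨x, hx, hne, hnlt⟩ := hcon a ha
    rcases hlt.total x a with h | h | h
    · exact absurd h hnlt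
    · exact absurd h hne
    · exact ⟨⟨x, hx⟩, h⟩
  choose nxt hnxt using step
  obtain ⟨a0, ha0⟩ := hS
  set u : ℕ → {x // x ∈ S} := fun m => nxt^[m] ⟨a0, ha0⟩ with hu
  have hstep : ∀ m, lt (u m).1 (u (m+1)).1 := by
    intro m
    have : u (m+1) = nxt (u m) := by
      rw [hu]; simp [Function.iterate_succ_apply']
    rw [this]
    exact hnxt _
  have hmono : ∀ i j, i < j → lt (u i).1 (u j).1 := by
    intro i j hij
    induction hij with
    | refl => exact hstep i
    | step _ ih => exact hlt.trans _ _ _ ih (hstep _)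
  obtain ⟨i, j, hij, hle⟩ := (Set.isPWO_of_wellQuasiOrderedLE (Set.univ : Set (Fin n →₀ ℕ)))
    (fun m => ⟨(u m).1, Set.mem_univ _⟩)
  have h1 : lt (u i).1 (u j).1 := hmono _ _ hij
  rcases eq_or_ne ((u j).1) ((u i).1) with heq | hne
  · rw [heq] at h1; exact hlt.irrefl _ h1
  · exact hlt.irrefl _ (hlt.trans _ _ _ h1 (lt_of_le_of_ne hlt hle hne))

theorem wf_rel (hlt : IsLocalMonomialOrder lt) :
    WellFounded (fun a b : Fin n →₀ ℕ => lt b a) := by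
  rw [WellFounded.wellFounded_iff_has_min]
  intro S hS
  obtain ⟨m, hm, hgr⟩ := exists_greatest hlt hS
  refine ⟨m, hm, fun x hx hltmx => ?_⟩
  rcases eq_or_ne x m with rfl | hne
  · exact hlt.irrefl _ hltmx
  · exact hlt.irrefl _ (hlt.trans _ _ _ hltmx (hgr x hx hne))

end Order

section Series

set_option maxHeartbeats 1000000

variable {n : ℕ} {k : Type} [Field k] {lt : (Fin n →₀ ℕ) → (Fin n →₀ ℕ) → Prop}

theorem exists_isExp (hlt : IsLocalMonomialOrder lt) {f : MvPowerSeries (Fin n) k}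
    (hf : f ≠ 0) : ∃ e, IsExp lt f e := by
  have hne : (ND f).Nonempty := by
    by_contra hemp
    rw [Set.not_nonempty_iff_eq_empty] at hemp
    apply hf
    ext α
    have : α ∉ ND f := by rw [hemp]; exact Set.notMem_empty _
    simpa [ND] using this
  obtain ⟨m, hm, hgr⟩ := exists_greatest hlt hne
  exact ⟨m, hm, hgr⟩

/-- helper: `x ≼ a`, `y ≼ b`, not both equal, implies `x + y ≺ a + b`. -/
theorem lt_add_pair (hlt : IsLocalMonomialOrder lt) {x a y b : Fin n →₀ ℕ}
    (hx : x = a ∨ lt x a) (hy : y = b ∨ lt y b) (hne : ¬(x = a ∧ y = b)) :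
    lt (x + y) (a + b) := by
  rcases hx with rfl | hx
  · rcases hy with rfl | hy
    · exact absurd ⟨rfl, rfl⟩ hne
    · have := hlt.add_right y b x hy
      rwa [add_comm y x, add_comm b x] at this
  · rcases hy with rfl | hy
    · exact hlt.add_right x a y hx
    · have h1 := hlt.add_right x a y hx
      have h2 := hlt.add_right y b a hy
      rw [add_comm y a, add_comm b a] at h2
      exact hlt.trans _ _ _ h1 h2

theorem isExp_mul (hlt : IsLocalMonomialOrder lt) {u : MvPowerSeries (Fin n) k}
    {p : MvPolynomial (Fin n) k} {a b : Fin n →₀ ℕ}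
    (hu : IsExp lt u a) (hp : IsExpP lt p b) :
    IsExp lt (u * (p : MvPowerSeries (Fin n) k)) (a + b) := by
  classical
  have hcoeff : MvPowerSeries.coeff (a + b) (u * (p : MvPowerSeries (Fin n) k))
      = MvPowerSeries.coeff a u * MvPolynomial.coeff b p := by
    rw [MvPowerSeries.coeff_mul]
    rw [Finset.sum_eq_single_of_mem (a, b) (Finset.HasAntidiagonal.mem_antidiagonal.mpr rfl)]
    · rw [MvPolynomial.coeff_coe]
    · rintro ⟨x, y⟩ hxy hne
      rw [Finset.HasAntidiagonal.mem_antidiagonal] at hxy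
      by_contra hterm
      have hx : x ∈ ND u := by
        by_contra h0
        have hx0 : MvPowerSeries.coeff x u = 0 := not_not.mp h0
        exact hterm (by rw [hx0, zero_mul])
      have hy : MvPolynomial.coeff y p ≠ 0 := by
        intro h0
        exact hterm (by rw [MvPolynomial.coeff_coe, h0, mul_zero])
      have hxa : x = a ∨ lt x a := by
        rcases eq_or_ne x a with h | h
        · exact Or.inl h
        · exact Or.inr (hu.2 x hx h)
      have hyb : y = b ∨ lt y b := by
        rcases eq_or_ne y b with h | h
        · exact Or.inl h
        · exact Or.inr (hp.2 y (MvPolynomial.mem_support_iff.mpr hy) h)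
      have : lt (x + y) (a + b) := lt_add_pair hlt hxa hyb (by
        rintro ⟨rfl, rfl⟩; exact hne rfl)
      rw [hxy] at this
      exact hlt.irrefl _ this
  constructor
  · show MvPowerSeries.coeff (a + b) _ ≠ 0
    rw [hcoeff]
    exact mul_ne_zero hu.1 (MvPolynomial.mem_support_iff.mp hp.1)
  · intro β hβ hne
    have : MvPowerSeries.coeff β (u * (p : MvPowerSeries (Fin n) k)) ≠ 0 := hβ
    rw [MvPowerSeries.coeff_mul] at this
    obtain ⟨⟨x, y⟩, hxy, hterm⟩ := Finset.exists_ne_zero_of_sum_ne_zero this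
    rw [Finset.HasAntidiagonal.mem_antidiagonal] at hxy
    have hx : x ∈ ND u := by
      by_contra h0
      have hx0 : MvPowerSeries.coeff x u = 0 := not_not.mp h0
      exact hterm (by rw [hx0, zero_mul])
    have hy : MvPolynomial.coeff y p ≠ 0 := fun h0 =>
      hterm (by rw [MvPolynomial.coeff_coe, h0, mul_zero])
    have hxa : x = a ∨ lt x a := by
      rcases eq_or_ne x a with h | h
      · exact Or.inl h
      · exact Or.inr (hu.2 x hx h)
    have hyb : y = b ∨ lt y b := by
      rcases eq_or_ne y b with h | h
      · exact Or.inl h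
      · exact Or.inr (hp.2 y (MvPolynomial.mem_support_iff.mpr hy) h)
    have hlt2 : lt (x + y) (a + b) := lt_add_pair hlt hxa hyb (by
      rintro ⟨rfl, rfl⟩; exact hne hxy.symm)
    rwa [hxy] at hlt2

end Series

end SBaux
namespace SBaux

section Krull

set_option maxHeartbeats 1000000

variable {n : ℕ} {k : Type} [Field k]

/-- total degree of an exponent -/
def dg {n : ℕ} (β : Fin n →₀ ℕ) : ℕ := β.sum fun _ m => m

theorem dg_add {a b : Fin n →₀ ℕ} : dg (a + b) = dg a + dg b := by
  classical
  unfold dg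
  exact Finsupp.sum_add_index' (fun _ => rfl) (fun _ _ _ => rfl)

theorem apply_le_dg (β : Fin n →₀ ℕ) (i : Fin n) : β i ≤ dg β := by
  classical
  by_cases h : i ∈ β.support
  · exact Finset.single_le_sum (fun _ _ => Nat.zero_le _) h
  · simp [Finsupp.notMem_support_iff.mp h]

theorem dg_eq_zero {β : Fin n →₀ ℕ} (h : dg β = 0) : β = 0 := by
  classical
  ext i
  simp only [Finsupp.coe_zero, Pi.zero_apply]
  have := apply_le_dg β i
  omega

/-- coefficient of a sum of monomials over a finset -/
theorem coeff_sum_monomial {s : Finset (Fin n →₀ ℕ)} {c : (Fin n →₀ ℕ) → k}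
    (γ : Fin n →₀ ℕ) :
    MvPolynomial.coeff γ (∑ β ∈ s, MvPolynomial.monomial β (c β)) =
      if γ ∈ s then c γ else 0 := by
  classical
  rw [MvPolynomial.coeff_sum]
  simp only [MvPolynomial.coeff_monomial]
  exact Finset.sum_ite_eq' s γ c

/-- a polynomial all of whose monomials have degree at least `d` lies in `m^d`. -/
theorem mem_pow_of_deg (d : ℕ) (q : MvPolynomial (Fin n) k)
    (h : ∀ β ∈ q.support, d ≤ dg β) :
    q ∈ (Ideal.span (Set.range (MvPolynomial.X : Fin n → MvPolynomial (Fin n) k))) ^ d := by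
  classical
  set mI := Ideal.span (Set.range (MvPolynomial.X : Fin n → MvPolynomial (Fin n) k)) with hmI
  have hmono : ∀ (d : ℕ) (β : Fin n →₀ ℕ) (c : k), d ≤ dg β →
      (MvPolynomial.monomial β c : MvPolynomial (Fin n) k) ∈ mI ^ d := by
    intro d
    induction d with
    | zero => intro β c _; simp
    | succ d ih =>
      intro β c hd
      have hβ : β ≠ 0 := by
        intro h0; rw [h0] at hd; simp [dg] at hd
      obtain ⟨i, hi⟩ := Finsupp.support_nonempty_iff.mpr hβ
      have hile : Finsupp.single i 1 ≤ β := by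
        rw [Finsupp.single_le_iff]
        exact Nat.one_le_iff_ne_zero.mpr (Finsupp.mem_support_iff.mp hi)
      set β' := β - Finsupp.single i 1 with hβ'
      have hsum : Finsupp.single i 1 + β' = β := by
        rw [hβ', add_comm]; exact tsub_add_cancel_of_le hile
      have hdg : d ≤ dg β' := by
        have h1 : dg β = 1 + dg β' := by
          rw [← hsum, dg_add]
          congr 1
          simp [dg, Finsupp.sum_single_index]
        omega
      have : (MvPolynomial.monomial β c : MvPolynomial (Fin n) k)
          = MvPolynomial.X i * MvPolynomial.monomial β' c := by
        rw [MvPolynomial.X, MvPolynomial.monomial_mul, one_mul, hsum]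
      rw [this, pow_succ']
      exact Ideal.mul_mem_mul (Ideal.subset_span ⟨i, rfl⟩) (ih β' c hdg)
  have hq : q = ∑ β ∈ q.support, MvPolynomial.monomial β (MvPolynomial.coeff β q) :=
    (MvPolynomial.support_sum_monomial_coeff q).symm
  rw [hq]
  exact Submodule.sum_mem _ (fun β hβ => hmono d β _ (h β hβ))

theorem constantCoeff_mem_span_X {q : MvPolynomial (Fin n) k}
    (hq : q ∈ Ideal.span (Set.range (MvPolynomial.X : Fin n → MvPolynomial (Fin n) k))) :
    MvPolynomial.constantCoeff q = 0 := by
  have hle : Ideal.span (Set.range (MvPolynomial.X : Fin n → MvPolynomial (Fin n) k)) ≤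
      RingHom.ker (MvPolynomial.constantCoeff (σ := Fin n) (R := k)) := by
    rw [Ideal.span_le]
    rintro _ ⟨i, rfl⟩
    simp [RingHom.mem_ker]
  exact RingHom.mem_ker.mp (hle hq)

variable {lt : (Fin n →₀ ℕ) → (Fin n →₀ ℕ) → Prop}

/-- The key lemma: if `h` is `m`-adically approximated by elements of `I`, then
the leading exponent of `h` is the leading exponent of an element of `I`. -/
theorem mem_expSetP_of_approx (hlt : IsLocalMonomialOrder lt)
    (I : Ideal (MvPolynomial (Fin n) k)) (h : MvPowerSeries (Fin n) k)
    (δ : Fin n →₀ ℕ) (hδ : IsExp lt h δ)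
    (happ : ∀ d : ℕ, ∃ p ∈ I, ∀ β : Fin n →₀ ℕ, dg β < d →
      MvPolynomial.coeff β p = MvPowerSeries.coeff β h) :
    δ ∈ ExpSetP lt I := by
  classical
  set mI : Ideal (MvPolynomial (Fin n) k) :=
    Ideal.span (Set.range (MvPolynomial.X : Fin n → MvPolynomial (Fin n) k)) with hmIdef
  -- the ideal of polynomials supported strictly below δ
  set J : Ideal (MvPolynomial (Fin n) k) :=
    { carrier := {q : MvPolynomial (Fin n) k | ∀ β ∈ q.support, lt β δ}
      add_mem' := by
        intro a b ha hb β hβ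
        rcases Finset.mem_union.mp (MvPolynomial.support_add hβ) with h' | h'
        · exact ha β h'
        · exact hb β h'
      zero_mem' := by simp
      smul_mem' := by
        intro c x hx β hβ
        rw [smul_eq_mul] at hβ
        obtain ⟨u, hu, v, hv, rfl⟩ := Finset.mem_add.mp (MvPolynomial.support_mul c x hβ)
        have hvδ : lt v δ := hx v hv
        rcases hlt.le_zero u with rfl | hu0
        · rwa [zero_add]
        · have : lt (u + v) (0 + v) := hlt.add_right u 0 v hu0
          rw [zero_add] at this
          exact hlt.trans _ _ _ this hvδ } with hJdef
  have hJmem : ∀ q : MvPolynomial (Fin n) k, q ∈ J ↔ ∀ β ∈ q.support, lt β δ := fun q => Iff.rfl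
  -- the key approximation: for each d, monomial δ 1 ∈ (I ⊔ J) + mI^d
  have hc : MvPowerSeries.coeff δ h ≠ 0 := hδ.1
  set c := MvPowerSeries.coeff δ h with hcdef
  have hkey : ∀ d : ℕ, ∃ a ∈ (I ⊔ J : Ideal (MvPolynomial (Fin n) k)), ∃ t ∈ mI ^ d,
      (MvPolynomial.monomial δ (1 : k) : MvPolynomial (Fin n) k) = a + t := by
    intro d
    set d' := max d (dg δ + 1) with hd'
    obtain ⟨p, hpI, hp⟩ := happ d'
    set P : MvPolynomial (Fin n) k := MvPolynomial.C c⁻¹ * p with hPdef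
    have hPI : P ∈ I := Ideal.mul_mem_left _ _ hpI
    have hPcoeff : ∀ β, MvPolynomial.coeff β P = c⁻¹ * MvPolynomial.coeff β p := by
      intro β; rw [hPdef, MvPolynomial.coeff_C_mul]
    set sLow := P.support.filter (fun β => β ≠ δ ∧ dg β < d') with hsLow
    set b : MvPolynomial (Fin n) k := ∑ β ∈ sLow, MvPolynomial.monomial β (MvPolynomial.coeff β P) with hbdef
    have hbJ : b ∈ J := by
      rw [hbdef]
      refine Submodule.sum_mem _ (fun β hβ => ?_)
      rw [hJmem]
      intro γ hγ
      have hγβ : γ = β :=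
        Finset.mem_singleton.mp (MvPolynomial.support_monomial_subset hγ)
      subst hγβ
      rw [Finset.mem_filter] at hβ
      obtain ⟨hβP, hβδ, hβd⟩ := hβ
      have hco : MvPolynomial.coeff γ p = MvPowerSeries.coeff γ h := hp γ hβd
      have hND : γ ∈ ND h := by
        have hPne := MvPolynomial.mem_support_iff.mp hβP
        rw [hPcoeff] at hPne
        have hpne : MvPolynomial.coeff γ p ≠ 0 := by
          intro h0; rw [h0, mul_zero] at hPne; exact hPne rfl
        show MvPowerSeries.coeff γ h ≠ 0
        rwa [← hco]
      exact hδ.2 γ hND hβδ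
    set t : MvPolynomial (Fin n) k := P - MvPolynomial.monomial δ 1 - b with htdef
    have htmem : t ∈ mI ^ d := by
      have hd'' : ∀ β ∈ t.support, d ≤ dg β := by
        intro β hβ
        by_contra hlow
        push_neg at hlow
        have hβd' : dg β < d' := lt_of_lt_of_le hlow (le_max_left _ _)
        have hco : MvPolynomial.coeff β t = 0 := by
          rw [htdef]
          simp only [MvPolynomial.coeff_sub]
          rw [hbdef, coeff_sum_monomial, MvPolynomial.coeff_monomial]
          rcases eq_or_ne β δ with rfl | hβδ
          · have hδs : β ∉ sLow := by
              rw [hsLow, Finset.mem_filter]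
              rintro ⟨-, hne, -⟩; exact hne rfl
            rw [if_neg hδs, if_pos rfl]
            have : MvPolynomial.coeff β P = 1 := by
              rw [hPcoeff, hp β hβd', ← hcdef, inv_mul_cancel₀ hc]
            rw [this]; ring
          · rw [if_neg (fun h' => hβδ h'.symm)]
            by_cases hβP : β ∈ P.support
            · have : β ∈ sLow := by
                rw [hsLow, Finset.mem_filter]; exact ⟨hβP, hβδ, hβd'⟩
              rw [if_pos this]; ring
            · have h0 : MvPolynomial.coeff β P = 0 :=
                MvPolynomial.notMem_support_iff.mp hβP
              have : β ∉ sLow := by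
                rw [hsLow, Finset.mem_filter]
                rintro ⟨hmem, -⟩; exact hβP hmem
              rw [if_neg this, h0]; ring
        exact (MvPolynomial.mem_support_iff.mp hβ) hco
      exact mem_pow_of_deg d t hd''
    refine ⟨P - b, ?_, -t, Submodule.neg_mem _ htmem, by rw [htdef]; ring⟩
    exact Submodule.sub_mem _ (Ideal.mem_sup_left hPI) (Ideal.mem_sup_right hbJ)
  -- pass to the quotient module and apply Krull's intersection theorem
  set N : Submodule (MvPolynomial (Fin n) k) (MvPolynomial (Fin n) k) :=
    (I ⊔ J : Ideal (MvPolynomial (Fin n) k)) with hNdef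
  set z : MvPolynomial (Fin n) k ⧸ N := Submodule.Quotient.mk (MvPolynomial.monomial δ (1 : k))
    with hzdef
  have hz : z ∈ (⨅ i : ℕ, mI ^ i • (⊤ : Submodule (MvPolynomial (Fin n) k)
      (MvPolynomial (Fin n) k ⧸ N))) := by
    rw [Submodule.mem_iInf]
    intro d
    obtain ⟨a, ha, t, ht, heq⟩ := hkey d
    have : z = Submodule.Quotient.mk t := by
      rw [hzdef, heq, Submodule.Quotient.mk_add,
        (Submodule.Quotient.mk_eq_zero N).mpr ha, zero_add]
    rw [this]
    have : (Submodule.Quotient.mk t : MvPolynomial (Fin n) k ⧸ N)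
        = t • Submodule.Quotient.mk (1 : MvPolynomial (Fin n) k) := by
      rw [← Submodule.Quotient.mk_smul, smul_eq_mul, mul_one]
    rw [this]
    exact Submodule.smul_mem_smul ht Submodule.mem_top
  obtain ⟨r, hr⟩ := (Ideal.mem_iInf_smul_pow_eq_bot_iff mI z).mp hz
  have hz0 : ((1 : MvPolynomial (Fin n) k) - (r : MvPolynomial (Fin n) k)) • z = 0 := by
    rw [sub_smul, one_smul, hr, sub_self]
  have hmemN : ((1 : MvPolynomial (Fin n) k) - (r : MvPolynomial (Fin n) k))
      * MvPolynomial.monomial δ 1 ∈ N := by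
    rw [← Submodule.Quotient.mk_eq_zero N]
    rw [← Submodule.Quotient.mk_smul N, smul_eq_mul] at hz0
    · exact hz0
  obtain ⟨a, haI, b, hbJ, hab⟩ := Submodule.mem_sup.mp hmemN
  -- a is the desired polynomial with leading exponent δ
  have hrconst : MvPolynomial.constantCoeff (r : MvPolynomial (Fin n) k) = 0 :=
    constantCoeff_mem_span_X r.2
  have haeq : a = ((1 : MvPolynomial (Fin n) k) - (r : MvPolynomial (Fin n) k))
      * MvPolynomial.monomial δ 1 - b := by
    rw [← hab]; ring
  have hacoeff : ∀ γ, MvPolynomial.coeff γ a =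
      (if δ ≤ γ then MvPolynomial.coeff (γ - δ)
        ((1 : MvPolynomial (Fin n) k) - (r : MvPolynomial (Fin n) k)) else 0)
        - MvPolynomial.coeff γ b := by
    intro γ
    rw [haeq, MvPolynomial.coeff_sub, MvPolynomial.coeff_mul_monomial']
    split_ifs with hle
    · rw [mul_one]
    · rfl
  have hbδ : MvPolynomial.coeff δ b = 0 := by
    by_contra hb0
    exact hlt.irrefl δ (hbJ δ (MvPolynomial.mem_support_iff.mpr hb0))
  have haδ : MvPolynomial.coeff δ a = 1 := by
    rw [hacoeff, if_pos (le_refl δ), hbδ, sub_zero, tsub_self]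
    rw [MvPolynomial.constantCoeff_eq] at hrconst
    rw [MvPolynomial.coeff_sub, hrconst, sub_zero]
    classical
    rw [MvPolynomial.coeff_one, if_pos rfl]
  refine ⟨a, haI, ?_, ?_⟩
  · exact MvPolynomial.mem_support_iff.mpr (by rw [haδ]; exact one_ne_zero)
  · intro β hβ hne
    have hco := MvPolynomial.mem_support_iff.mp hβ
    rw [hacoeff] at hco
    by_cases hbβ : MvPolynomial.coeff β b ≠ 0
    · exact hbJ β (MvPolynomial.mem_support_iff.mpr hbβ)
    · push_neg at hbβ
      rw [hbβ, sub_zero] at hco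
      have hle : δ ≤ β := by
        by_contra hnle
        rw [if_neg hnle] at hco; exact hco rfl
      rw [if_pos hle] at hco
      have hγne : β - δ ≠ 0 := by
        intro h0
        apply hne
        have h2 := tsub_add_cancel_of_le hle
        rw [h0, zero_add] at h2
        exact h2.symm
      rcases hlt.le_zero (β - δ) with h0 | h0
      · exact absurd h0 hγne
      · have h1 : lt ((β - δ) + δ) (0 + δ) := hlt.add_right _ 0 δ h0
        rw [zero_add, tsub_add_cancel_of_le hle] at h1
        exact h1

end Krull

end SBaux
namespace SBaux

section Approx

set_option maxHeartbeats 1000000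

variable {n : ℕ} {k : Type} [Field k]

/-- the finset of exponents of total degree `< d` -/
def Fd (n d : ℕ) : Finset (Fin n →₀ ℕ) :=
  (Finset.Iic (Finsupp.equivFunOnFinite.symm (fun _ : Fin n => d))).filter (fun β => dg β < d)

theorem mem_Fd {d : ℕ} {β : Fin n →₀ ℕ} : β ∈ Fd n d ↔ dg β < d := by
  unfold Fd
  rw [Finset.mem_filter, Finset.mem_Iic]
  constructor
  · exact fun h => h.2
  · intro h
    refine ⟨?_, h⟩
    intro i
    have h1 := apply_le_dg β i
    have : (Finsupp.equivFunOnFinite.symm (fun _ : Fin n => d)) i = d := rfl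
    omega

/-- polynomial truncation of a power series below total degree `d` -/
def truncP (c : MvPowerSeries (Fin n) k) (d : ℕ) : MvPolynomial (Fin n) k :=
  ∑ β ∈ Fd n d, MvPolynomial.monomial β (MvPowerSeries.coeff β c)

theorem coeff_truncP (c : MvPowerSeries (Fin n) k) (d : ℕ) (β : Fin n →₀ ℕ) :
    MvPolynomial.coeff β (truncP c d) = if dg β < d then MvPowerSeries.coeff β c else 0 := by
  unfold truncP
  rw [coeff_sum_monomial]
  by_cases h : dg β < d
  · rw [if_pos (mem_Fd.mpr h), if_pos h]
  · rw [if_neg (fun hm => h (mem_Fd.mp hm)), if_neg h]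

/-- every element of the extended ideal is m-adically approximated by elements of `I`. -/
theorem approx_poly (I : Ideal (MvPolynomial (Fin n) k)) :
    ∀ h ∈ Ideal.span
      ((fun p : MvPolynomial (Fin n) k => (p : MvPowerSeries (Fin n) k)) '' (I : Set _)),
    ∀ d : ℕ, ∃ p ∈ I, ∀ β : Fin n →₀ ℕ, dg β < d →
      MvPolynomial.coeff β p = MvPowerSeries.coeff β h := by
  classical
  set T : Ideal (MvPowerSeries (Fin n) k) :=
    { carrier := {h | ∀ d : ℕ, ∃ p ∈ I, ∀ β : Fin n →₀ ℕ, dg β < d →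
        MvPolynomial.coeff β p = MvPowerSeries.coeff β h}
      add_mem' := by
        rintro a b ha hb d
        obtain ⟨p, hpI, hp⟩ := ha d
        obtain ⟨q, hqI, hq⟩ := hb d
        refine ⟨p + q, Submodule.add_mem _ hpI hqI, fun β hβ => ?_⟩
        rw [MvPolynomial.coeff_add, map_add, hp β hβ, hq β hβ]
      zero_mem' := by
        intro d
        exact ⟨0, Submodule.zero_mem _, fun β _ => by simp⟩
      smul_mem' := by
        intro c x hx d
        obtain ⟨p, hpI, hp⟩ := hx d
        refine ⟨truncP c d * p, Ideal.mul_mem_left _ _ hpI, fun β hβ => ?_⟩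
        rw [smul_eq_mul]
        rw [MvPolynomial.coeff_mul, MvPowerSeries.coeff_mul]
        refine Finset.sum_congr rfl ?_
        rintro ⟨x1, y1⟩ hxy
        rw [Finset.HasAntidiagonal.mem_antidiagonal] at hxy
        have hdg : dg x1 + dg y1 = dg β := by rw [← dg_add, hxy]
        have hx1 : dg x1 < d := by omega
        have hy1 : dg y1 < d := by
          have := dg_add (a := x1) (b := y1)
          omega
        rw [coeff_truncP, if_pos hx1, hp y1 hy1] } with hTdef
  have hsub : (fun p : MvPolynomial (Fin n) k => (p : MvPowerSeries (Fin n) k)) '' (I : Set _)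
      ⊆ (T : Set (MvPowerSeries (Fin n) k)) := by
    rintro _ ⟨p, hpI, rfl⟩
    intro d
    exact ⟨p, hpI, fun β _ => (MvPolynomial.coeff_coe p β).symm⟩
  intro h hmem
  exact (Ideal.span_le.mpr hsub) hmem

/-- Lemma C : leading exponents of nonzero elements of the extended ideal are leading
exponents of polynomials of `I`. -/
theorem exp_mem_of_mem_span {lt : (Fin n →₀ ℕ) → (Fin n →₀ ℕ) → Prop}
    (hlt : IsLocalMonomialOrder lt) (I : Ideal (MvPolynomial (Fin n) k))
    {h : MvPowerSeries (Fin n) k}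
    (hmem : h ∈ Ideal.span
      ((fun p : MvPolynomial (Fin n) k => (p : MvPowerSeries (Fin n) k)) '' (I : Set _)))
    {δ : Fin n →₀ ℕ} (hδ : IsExp lt h δ) : δ ∈ ExpSetP lt I :=
  mem_expSetP_of_approx hlt I h δ hδ (approx_poly I h hmem)

end Approx

end SBaux
namespace SBaux

section Main

set_option maxHeartbeats 2000000

variable {n r : ℕ} {k : Type} [Field k]
variable {lt : (Fin n →₀ ℕ) → (Fin n →₀ ℕ) → Prop}

open Classical in
noncomputable def jfunD (e : Fin r → (Fin n →₀ ℕ)) (α : Fin n →₀ ℕ) : Option (Fin r) :=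
  if h : ∃ j : Fin r, e j ≤ α then some h.choose else none

open Classical in
theorem jfunD_some {e : Fin r → (Fin n →₀ ℕ)} {α : Fin n →₀ ℕ} (h : ∃ j : Fin r, e j ≤ α) :
    jfunD e α = some h.choose := dif_pos h

theorem jfunD_le {e : Fin r → (Fin n →₀ ℕ)} {α : Fin n →₀ ℕ} {j : Fin r}
    (h : jfunD e α = some j) : e j ≤ α := by
  by_cases h' : ∃ j' : Fin r, e j' ≤ α
  · rw [jfunD_some h', Option.some.injEq] at h
    exact h ▸ h'.choose_spec
  · unfold jfunD at h
    rw [dif_neg h'] at h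
    cases h

theorem lt_step (hlt : IsLocalMonomialOrder lt) {g : Fin r → MvPolynomial (Fin n) k}
    {e : Fin r → (Fin n →₀ ℕ)} (he : ∀ j, IsExpP lt (g j) (e j))
    {j : Fin r} {α v : Fin n →₀ ℕ}
    (hv : v ∈ ((g j).support.erase (e j)).filter (fun v => v ≤ α)) :
    lt α ((α - v) + e j) := by
  rw [Finset.mem_filter, Finset.mem_erase] at hv
  obtain ⟨⟨hne, hsupp⟩, hle⟩ := hv
  have h1 : lt v (e j) := (he j).2 v hsupp hne
  have h2 := hlt.add_right v (e j) (α - v) h1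
  rwa [add_comm v (α - v), tsub_add_cancel_of_le hle, add_comm (e j) (α - v)] at h2

open Classical in
noncomputable def wD (hlt : IsLocalMonomialOrder lt) (g : Fin r → MvPolynomial (Fin n) k)
    (e : Fin r → (Fin n →₀ ℕ)) (he : ∀ j, IsExpP lt (g j) (e j))
    (f : MvPowerSeries (Fin n) k) : (Fin n →₀ ℕ) → k :=
  (wf_rel hlt).fix (fun α IH =>
    if h : ∃ j : Fin r, e j ≤ α then
      (MvPolynomial.coeff (e h.choose) (g h.choose))⁻¹ *
        (MvPowerSeries.coeff α f -
          ∑ j : Fin r, ∑ v ∈ (((g j).support.erase (e j)).filter (fun v => v ≤ α)).attach,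
            (if jfunD e ((α - ↑v) + e j) = some j then
              IH ((α - ↑v) + e j) (lt_step hlt he v.2) else 0)
              * MvPolynomial.coeff (↑v : Fin n →₀ ℕ) (g j))
    else 0)

open Classical in
theorem wD_eq (hlt : IsLocalMonomialOrder lt) (g : Fin r → MvPolynomial (Fin n) k)
    (e : Fin r → (Fin n →₀ ℕ)) (he : ∀ j, IsExpP lt (g j) (e j))
    (f : MvPowerSeries (Fin n) k) (α : Fin n →₀ ℕ) :
    wD hlt g e he f α =
      if h : ∃ j : Fin r, e j ≤ α then
        (MvPolynomial.coeff (e h.choose) (g h.choose))⁻¹ *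
          (MvPowerSeries.coeff α f -
            ∑ j : Fin r, ∑ v ∈ (((g j).support.erase (e j)).filter (fun v => v ≤ α)).attach,
              (if jfunD e ((α - ↑v) + e j) = some j then
                wD hlt g e he f ((α - ↑v) + e j) else 0)
                * MvPolynomial.coeff (↑v : Fin n →₀ ℕ) (g j))
      else 0 :=
  WellFounded.fix_eq _ _ α

open Classical in
noncomputable def qD (hlt : IsLocalMonomialOrder lt) (g : Fin r → MvPolynomial (Fin n) k)
    (e : Fin r → (Fin n →₀ ℕ)) (he : ∀ j, IsExpP lt (g j) (e j))
    (f : MvPowerSeries (Fin n) k) (j : Fin r) : MvPowerSeries (Fin n) k :=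
  fun β => if jfunD e (β + e j) = some j then wD hlt g e he f (β + e j) else 0

open Classical in
theorem coeff_qD (hlt : IsLocalMonomialOrder lt) (g : Fin r → MvPolynomial (Fin n) k)
    (e : Fin r → (Fin n →₀ ℕ)) (he : ∀ j, IsExpP lt (g j) (e j))
    (f : MvPowerSeries (Fin n) k) (j : Fin r) (β : Fin n →₀ ℕ) :
    MvPowerSeries.coeff β (qD hlt g e he f j) =
      if jfunD e (β + e j) = some j then wD hlt g e he f (β + e j) else 0 :=
  MvPowerSeries.coeff_apply _ _

open Classical in
theorem keyComp (hlt : IsLocalMonomialOrder lt) (g : Fin r → MvPolynomial (Fin n) k)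
    (e : Fin r → (Fin n →₀ ℕ)) (he : ∀ j, IsExpP lt (g j) (e j))
    (f : MvPowerSeries (Fin n) k) (α : Fin n →₀ ℕ) (hPα : ∃ j : Fin r, e j ≤ α) :
    MvPowerSeries.coeff α
        (∑ j : Fin r, qD hlt g e he f j * ((g j : MvPolynomial (Fin n) k) : MvPowerSeries (Fin n) k))
      = MvPowerSeries.coeff α f := by
  have hlc : ∀ j, MvPolynomial.coeff (e j) (g j) ≠ 0 :=
    fun j => MvPolynomial.mem_support_iff.mp (he j).1
  rw [map_sum]
  have hterm : ∀ j : Fin r,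
      MvPowerSeries.coeff α (qD hlt g e he f j * ((g j : MvPolynomial (Fin n) k) : MvPowerSeries (Fin n) k))
        = (if jfunD e α = some j then wD hlt g e he f α * MvPolynomial.coeff (e j) (g j) else 0)
          + ∑ v ∈ ((g j).support.erase (e j)).filter (fun v => v ≤ α),
              (if jfunD e ((α - v) + e j) = some j then wD hlt g e he f ((α - v) + e j) else 0)
                * MvPolynomial.coeff v (g j) := by
    intro j
    rw [MvPowerSeries.coeff_mul]
    have hF : ∀ p ∈ Finset.HasAntidiagonal.antidiagonal α,
        MvPowerSeries.coeff p.1 (qD hlt g e he f j) * MvPowerSeries.coeff p.2 ((g j : MvPolynomial (Fin n) k) : MvPowerSeries (Fin n) k)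
          = (if jfunD e (p.1 + e j) = some j then wD hlt g e he f (p.1 + e j) else 0)
              * MvPolynomial.coeff p.2 (g j) := by
      intro p _
      rw [coeff_qD, MvPolynomial.coeff_coe]
    rw [Finset.sum_congr rfl hF]
    set F : (Fin n →₀ ℕ) × (Fin n →₀ ℕ) → k := fun p =>
      (if jfunD e (p.1 + e j) = some j then wD hlt g e he f (p.1 + e j) else 0)
        * MvPolynomial.coeff p.2 (g j) with hFdef
    rw [← Finset.sum_filter_add_sum_filter_not (Finset.HasAntidiagonal.antidiagonal α)
      (fun p => p.2 = e j) F]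
    congr 1
    · -- the top term
      by_cases hje : e j ≤ α
      · have hset : (Finset.HasAntidiagonal.antidiagonal α).filter (fun p => p.2 = e j)
            = {(α - e j, e j)} := by
          ext p
          simp only [Finset.mem_filter, Finset.HasAntidiagonal.mem_antidiagonal, Finset.mem_singleton]
          constructor
          · rintro ⟨hsum, h2⟩
            have h1 : p.1 = α - e j := by
              rw [← h2]; exact eq_tsub_of_add_eq hsum
            exact Prod.ext h1 h2
          · rintro rfl
            exact ⟨tsub_add_cancel_of_le hje, rfl⟩
        rw [hset, Finset.sum_singleton, hFdef]
        simp only []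
        rw [tsub_add_cancel_of_le hje, ite_mul, zero_mul]
      · have hset : (Finset.HasAntidiagonal.antidiagonal α).filter (fun p => p.2 = e j) = ∅ := by
          ext p
          simp only [Finset.mem_filter, Finset.HasAntidiagonal.mem_antidiagonal, Finset.notMem_empty,
            iff_false, not_and]
          intro hsum h2
          apply hje
          rw [← hsum, h2]
          exact le_add_self
        rw [hset, Finset.sum_empty]
        rw [if_neg (fun hsome => hje (jfunD_le hsome))]
    · -- the lower terms
      have hsubset : (Finset.HasAntidiagonal.antidiagonal α).filter
            (fun p => p.2 ∈ (g j).support ∧ p.2 ≠ e j)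
          ⊆ (Finset.HasAntidiagonal.antidiagonal α).filter (fun p => ¬ p.2 = e j) := by
        intro p hp
        rw [Finset.mem_filter] at hp ⊢
        exact ⟨hp.1, hp.2.2⟩
      rw [← Finset.sum_subset hsubset ?hzero]
      case hzero =>
        intro p hp hnp
        rw [Finset.mem_filter] at hp
        have hsupp : p.2 ∉ (g j).support := by
          intro hmem
          exact hnp (Finset.mem_filter.mpr ⟨hp.1, hmem, hp.2⟩)
        rw [hFdef]
        simp only []
        rw [MvPolynomial.notMem_support_iff.mp hsupp, mul_zero]
      refine Finset.sum_nbij' (fun p => p.2) (fun v => (α - v, v)) ?_ ?_ ?_ ?_ ?_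
      · intro p hp
        rw [Finset.mem_filter, Finset.HasAntidiagonal.mem_antidiagonal] at hp
        rw [Finset.mem_filter, Finset.mem_erase]
        refine ⟨⟨hp.2.2, hp.2.1⟩, ?_⟩
        rw [← hp.1]; exact le_add_self
      · intro v hv
        rw [Finset.mem_filter, Finset.mem_erase] at hv
        rw [Finset.mem_filter, Finset.HasAntidiagonal.mem_antidiagonal]
        exact ⟨tsub_add_cancel_of_le hv.2, hv.1.2, hv.1.1⟩
      · intro p hp
        rw [Finset.mem_filter, Finset.HasAntidiagonal.mem_antidiagonal] at hp
        have h1 : α - p.2 = p.1 := (eq_tsub_of_add_eq hp.1).symm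
        exact Prod.ext h1 rfl
      · intro v _; rfl
      · intro p hp
        rw [Finset.mem_filter, Finset.HasAntidiagonal.mem_antidiagonal] at hp
        rw [hFdef]
        simp only []
        have h1 : p.1 = α - p.2 := eq_tsub_of_add_eq hp.1
        rw [h1]
  rw [Finset.sum_congr rfl (fun j _ => hterm j)]
  rw [Finset.sum_add_distrib]
  have hj0 : jfunD e α = some hPα.choose := jfunD_some hPα
  have hpart1 : (∑ j : Fin r, if jfunD e α = some j then
      wD hlt g e he f α * MvPolynomial.coeff (e j) (g j) else 0)
      = wD hlt g e he f α * MvPolynomial.coeff (e hPα.choose) (g hPα.choose) := by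
    rw [Finset.sum_eq_single_of_mem hPα.choose (Finset.mem_univ _)]
    · rw [if_pos hj0]
    · intro j _ hne
      rw [if_neg]
      rw [hj0, Option.some.injEq]
      exact fun h => hne h.symm
  rw [hpart1]
  have hpart2 : (∑ j : Fin r, ∑ v ∈ ((g j).support.erase (e j)).filter (fun v => v ≤ α),
      (if jfunD e ((α - v) + e j) = some j then wD hlt g e he f ((α - v) + e j) else 0)
        * MvPolynomial.coeff v (g j))
      = ∑ j : Fin r, ∑ v ∈ (((g j).support.erase (e j)).filter (fun v => v ≤ α)).attach,
          (if jfunD e ((α - ↑v) + e j) = some j then wD hlt g e he f ((α - ↑v) + e j) else 0)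
            * MvPolynomial.coeff (↑v : Fin n →₀ ℕ) (g j) := by
    refine Finset.sum_congr rfl (fun j _ => ?_)
    exact (Finset.sum_attach _ _).symm
  rw [hpart2]
  have hw := wD_eq hlt g e he f α
  rw [dif_pos hPα] at hw
  rw [hw, mul_comm ((MvPolynomial.coeff (e hPα.choose) (g hPα.choose))⁻¹) _, mul_assoc,
    inv_mul_cancel₀ (hlc hPα.choose), mul_one]
  ring

end Main

end SBaux
namespace SBaux

section Bound

set_option maxHeartbeats 2000000

variable {n r : ℕ} {k : Type} [Field k]
variable {lt : (Fin n →₀ ℕ) → (Fin n →₀ ℕ) → Prop}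

open Classical in
theorem wbound (hlt : IsLocalMonomialOrder lt) (g : Fin r → MvPolynomial (Fin n) k)
    (e : Fin r → (Fin n →₀ ℕ)) (he : ∀ j, IsExpP lt (g j) (e j))
    (f : MvPowerSeries (Fin n) k) (ef : Fin n →₀ ℕ) (hef : IsExp lt f ef) :
    ∀ α, wD hlt g e he f α ≠ 0 → α = ef ∨ lt α ef := by
  intro α0
  refine (wf_rel hlt).induction
    (C := fun α => wD hlt g e he f α ≠ 0 → (α = ef ∨ lt α ef)) α0 ?_
  intro α IH hwα
  rw [wD_eq] at hwα
  by_cases hPα : ∃ j : Fin r, e j ≤ α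
  swap
  · rw [dif_neg hPα] at hwα; exact absurd rfl hwα
  rw [dif_pos hPα] at hwα
  by_cases hf0 : MvPowerSeries.coeff α f = 0
  · have hS : (∑ j : Fin r, ∑ v ∈ (((g j).support.erase (e j)).filter (fun v => v ≤ α)).attach,
        (if jfunD e ((α - ↑v) + e j) = some j then wD hlt g e he f ((α - ↑v) + e j) else 0)
          * MvPolynomial.coeff (↑v : Fin n →₀ ℕ) (g j)) ≠ 0 := by
      intro h0
      rw [h0, hf0, sub_zero, mul_zero] at hwα
      exact hwα rfl
    obtain ⟨j, -, hj⟩ := Finset.exists_ne_zero_of_sum_ne_zero hS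
    obtain ⟨v, -, hv⟩ := Finset.exists_ne_zero_of_sum_ne_zero hj
    have hleft := left_ne_zero_of_mul hv
    have hcond : jfunD e ((α - ↑v) + e j) = some j := by
      by_contra hc; rw [if_neg hc] at hleft; exact hleft rfl
    rw [if_pos hcond] at hleft
    have hrel : lt α ((α - ↑v) + e j) := lt_step hlt he v.2
    rcases IH _ hrel hleft with h1 | h1
    · exact Or.inr (h1 ▸ hrel)
    · exact Or.inr (hlt.trans _ _ _ hrel h1)
  · rcases eq_or_ne α ef with h1 | h1
    · exact Or.inl h1
    · exact Or.inr (hef.2 α hf0 h1)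

end Bound

end SBaux


/-- if `G = {g_1, …, g_r} ⊆ I ⊆ k[x]` satisfies
`Exp_≺(I) = ⋃_j (exp(g_j) + ℕ^n)` for a local order `≺`, then `G` is a `≺`-standard basis
of `Î = k[[x]]·I`: every nonzero `f ∈ Î` has a standard representation
`f = ∑_j q_j g_j` with `q_j ∈ k[[x]]` and `exp(q_j g_j) ≼ exp(f)` whenever `q_j ≠ 0`. -/
theorem standardBasis_of_extension {n : ℕ} (hn : 1 ≤ n) (k : Type) [Field k]
    (lt : (Fin n →₀ ℕ) → (Fin n →₀ ℕ) → Prop) (hlt : IsLocalMonomialOrder lt)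
    (I : Ideal (MvPolynomial (Fin n) k))
    {r : ℕ} (g : Fin r → MvPolynomial (Fin n) k)
    (hgI : ∀ j, g j ∈ I) (hgne : ∀ j, g j ≠ 0)
    (e : Fin r → (Fin n →₀ ℕ)) (he : ∀ j, IsExpP lt (g j) (e j))
    (hGB : ExpSetP lt I = ⋃ j, upSet (e j)) :
    ∀ f ∈ Ideal.span
      ((fun p : MvPolynomial (Fin n) k => (p : MvPowerSeries (Fin n) k)) '' (I : Set _)),
      f ≠ 0 → ∀ ef, IsExp lt f ef →
      ∃ q : Fin r → MvPowerSeries (Fin n) k,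
        f = (∑ j, q j * (g j : MvPowerSeries (Fin n) k)) ∧
        ∀ j, q j = 0 ∨ ∃ ej, IsExp lt (q j * (g j : MvPowerSeries (Fin n) k)) ej ∧
          (ej = ef ∨ lt ej ef) := by
  classical
  intro f hf hf0 ef hef
  refine ⟨SBaux.qD hlt g e he f, ?_, ?_⟩
  · by_contra hne
    have hRne : f - (∑ j, SBaux.qD hlt g e he f j * (g j : MvPowerSeries (Fin n) k)) ≠ 0 :=
      sub_ne_zero.mpr hne
    obtain ⟨ρ, hρ⟩ := SBaux.exists_isExp hlt hRne
    have hmem : f - (∑ j, SBaux.qD hlt g e he f j * (g j : MvPowerSeries (Fin n) k))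
        ∈ Ideal.span
          ((fun p : MvPolynomial (Fin n) k => (p : MvPowerSeries (Fin n) k)) '' (I : Set _)) := by
      refine Submodule.sub_mem _ hf (Submodule.sum_mem _ (fun j _ => ?_))
      exact Ideal.mul_mem_left _ _ (Ideal.subset_span ⟨g j, hgI j, rfl⟩)
    have hρE := SBaux.exp_mem_of_mem_span hlt I hmem hρ
    rw [hGB] at hρE
    obtain ⟨j, hj⟩ := Set.mem_iUnion.mp hρE
    obtain ⟨γ, hγ⟩ := hj
    have hPρ : ∃ j' : Fin r, e j' ≤ ρ := ⟨j, le_iff_exists_add.mpr ⟨γ, hγ⟩⟩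
    have hkey := SBaux.keyComp hlt g e he f ρ hPρ
    have hzero : MvPowerSeries.coeff ρ
        (f - (∑ j, SBaux.qD hlt g e he f j * (g j : MvPowerSeries (Fin n) k))) = 0 := by
      rw [map_sub, hkey, sub_self]
    exact hρ.1 hzero
  · intro j
    by_cases hqj : SBaux.qD hlt g e he f j = 0
    · exact Or.inl hqj
    · refine Or.inr ?_
      obtain ⟨βj, hβj⟩ := SBaux.exists_isExp hlt hqj
      refine ⟨βj + e j, SBaux.isExp_mul hlt hβj (he j), ?_⟩
      have hco : MvPowerSeries.coeff βj (SBaux.qD hlt g e he f j) ≠ 0 := hβj.1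
      rw [SBaux.coeff_qD] at hco
      have hcond : SBaux.jfunD e (βj + e j) = some j := by
        by_contra hc; rw [if_neg hc] at hco; exact hco rfl
      rw [if_pos hcond] at hco
      exact SBaux.wbound hlt g e he f ef hef _ hco
end
end
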